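/- Suppose Assumption Z0 holds with constant c₀ < 2, i.e., ∫_ℝ ‖C e^{-itH₀} u‖² dt ≤ c₀² ‖u‖² for all u ∈ ℋ. Then ‖e^{-itH} u‖ ≤ (1 - c₀/2)^{-1} ‖u‖ for all u ∈ ℋ and all t ∈ ℝ. -/

import Mathlib

open MeasureTheory Filter Topology ContinuousLinearMap

/-- under Assumption Z0 with `c₀ < 2`
(`∫_ℝ ‖C e^{-itH₀} u‖² dt ≤ c₀² ‖u‖²`), one has
`‖e^{-itH} u‖ ≤ (1 - c₀/2)⁻¹ ‖u‖` for all `t ∈ ℝ`.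
Here `U0 t = e^{-itH₀}` (unitary group) and `U t = e^{-itH}` with
`H = H₀ - (i/2)C*C`; the context facts (contractivity for `t ≥ 0`, the bound
`∫₀^∞ ‖C e^{-itH}u‖² dt ≤ ‖u‖²`, and Duhamel's formula) are hypotheses. -/
theorem stmt4
    {ℋ : Type*} [NormedAddCommGroup ℋ] [InnerProductSpace ℂ ℋ] [CompleteSpace ℋ]
    [TopologicalSpace.SeparableSpace ℋ]
    (C : ℋ →L[ℂ] ℋ)
    (U0 U : ℝ → ℋ →L[ℂ] ℋ)
    (hU00 : U0 0 = 1) (hgroup0 : ∀ s t : ℝ, U0 (s + t) = (U0 s).comp (U0 t))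
    (hunitary : ∀ t : ℝ, ∀ u : ℋ, ‖U0 t u‖ = ‖u‖)
    (hU0' : U 0 = 1) (hgroup : ∀ s t : ℝ, U (s + t) = (U s).comp (U t))
    (c₀ : ℝ) (hc₀nonneg : 0 ≤ c₀) (hc₀ : c₀ < 2)
    (hZ0 : ∀ u : ℋ, Integrable (fun t : ℝ => ‖C (U0 t u)‖ ^ 2) ∧
      ∫ t : ℝ, ‖C (U0 t u)‖ ^ 2 ≤ c₀ ^ 2 * ‖u‖ ^ 2)
    (hcontr : ∀ t : ℝ, 0 ≤ t → ∀ u : ℋ, ‖U t u‖ ≤ ‖u‖)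
    (hsm : ∀ u : ℋ, IntegrableOn (fun t => ‖C (U t u)‖ ^ 2) (Set.Ioi (0:ℝ)) ∧
      ∫ t in Set.Ioi (0:ℝ), ‖C (U t u)‖ ^ 2 ≤ ‖u‖ ^ 2)
    (hduhamel : ∀ u : ℋ, ∀ t : ℝ, 0 ≤ t →
      U0 (-t) (U t u) =
        u - (1/2 : ℂ) • ∫ s in (0:ℝ)..t, U0 (-s) ((adjoint C) (C (U s u)))) :
    ∀ t : ℝ, ∀ u : ℋ, ‖U t u‖ ≤ (1 - c₀ / 2)⁻¹ * ‖u‖ := by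
  have hpos : (0:ℝ) < 1 - c₀ / 2 := by linarith
  -- key estimate on the Duhamel integral
  have key : ∀ (v : ℋ) (T : ℝ), 0 ≤ T →
      ‖∫ s in (0:ℝ)..T, U0 (-s) ((adjoint C) (C (U s v)))‖ ≤ c₀ * ‖v‖ := by
    intro v T hT
    set f : ℝ → ℋ := fun s => U0 (-s) ((adjoint C) (C (U s v))) with hfdef
    by_cases hint : IntervalIntegrable f MeasureTheory.volume 0 T
    · set I : ℋ := ∫ s in (0:ℝ)..T, f s with hIdef
      set μ : Measure ℝ := (volume : Measure ℝ).restrict (Set.Ioc (0:ℝ) T) with hμ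
      have hIμ : I = ∫ s, f s ∂μ := intervalIntegral.integral_of_le hT
      have hfi : Integrable f μ := hint.1
      -- pointwise identity
      have hpt : ∀ s : ℝ, (inner ℂ I (f s) : ℂ) = inner ℂ (C (U0 s I)) (C (U s v)) := by
        intro s
        have hiso : ∀ x y : ℋ, (inner ℂ (U0 s x) (U0 s y) : ℂ) = inner ℂ x y :=
          (LinearMap.norm_map_iff_inner_map_map (U0 s)).mp (hunitary s)
        have hid : U0 s (f s) = (adjoint C) (C (U s v)) := by
          have h := hgroup0 s (-s)
          rw [add_neg_cancel, hU00] at h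
          have h2 := congrArg (fun A : ℋ →L[ℂ] ℋ => A ((adjoint C) (C (U s v)))) h
          simpa [hfdef] using h2.symm
        calc (inner ℂ I (f s) : ℂ) = inner ℂ (U0 s I) (U0 s (f s)) := (hiso _ _).symm
          _ = inner ℂ (U0 s I) ((adjoint C) (C (U s v))) := by rw [hid]
          _ = inner ℂ (C (U0 s I)) (C (U s v)) := adjoint_inner_right _ _ _
      have hinner_int : Integrable (fun s => (inner ℂ I (f s) : ℂ)) μ := hfi.const_inner I
      have h2 : ‖I‖ ^ 2 = ∫ s, RCLike.re (inner ℂ I (f s) : ℂ) ∂μ := by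
        calc ‖I‖ ^ 2 = RCLike.re (inner ℂ I I : ℂ) := (inner_self_eq_norm_sq I).symm
          _ = RCLike.re (∫ s, (inner ℂ I (f s) : ℂ) ∂μ) := by rw [integral_inner hfi I, ← hIμ]
          _ = ∫ s, RCLike.re (inner ℂ I (f s) : ℂ) ∂μ := (integral_re hinner_int).symm
      set a : ℝ → ℝ := fun s => ‖C (U0 s I)‖ with hadef
      set b : ℝ → ℝ := fun s => ‖C (U s v)‖ with hbdef
      have ha2 : Integrable (fun s => a s ^ 2) μ := ((hZ0 I).1).restrict
      have hb2 : Integrable (fun s => b s ^ 2) μ :=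
        ((hsm v).1).mono_set Set.Ioc_subset_Ioi_self
      have ham : AEStronglyMeasurable a μ := by
        have h := ha2.aestronglyMeasurable
        refine (Real.continuous_sqrt.comp_aestronglyMeasurable h).congr ?_
        filter_upwards with s
        exact Real.sqrt_sq (norm_nonneg _)
      have hbm : AEStronglyMeasurable b μ := by
        have h := hb2.aestronglyMeasurable
        refine (Real.continuous_sqrt.comp_aestronglyMeasurable h).congr ?_
        filter_upwards with s
        exact Real.sqrt_sq (norm_nonneg _)
      have hab : Integrable (fun s => a s * b s) μ := by
        refine (ha2.add hb2).mono (ham.mul hbm) ?_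
        filter_upwards with s
        simp only [Pi.add_apply]
        have h1 : (0:ℝ) ≤ a s := norm_nonneg _
        have h2' : (0:ℝ) ≤ b s := norm_nonneg _
        rw [Real.norm_of_nonneg (mul_nonneg h1 h2'), Real.norm_of_nonneg (by positivity)]
        nlinarith [sq_nonneg (a s - b s)]
      have h3 : ∫ s, RCLike.re (inner ℂ I (f s) : ℂ) ∂μ ≤ ∫ s, a s * b s ∂μ := by
        refine integral_mono hinner_int.re hab ?_
        intro s
        dsimp only
        rw [hpt s]
        exact re_inner_le_norm _ _
      have hma : MemLp a (ENNReal.ofReal 2) μ := by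
        rw [show ENNReal.ofReal (2:ℝ) = 2 by norm_num]
        exact (memLp_two_iff_integrable_sq ham).mpr ha2
      have hmb : MemLp b (ENNReal.ofReal 2) μ := by
        rw [show ENNReal.ofReal (2:ℝ) = 2 by norm_num]
        exact (memLp_two_iff_integrable_sq hbm).mpr hb2
      have hcs : ∫ s, a s * b s ∂μ ≤
          (∫ s, a s ^ (2:ℝ) ∂μ) ^ (1/2 : ℝ) * (∫ s, b s ^ (2:ℝ) ∂μ) ^ (1/2 : ℝ) :=
        integral_mul_le_Lp_mul_Lq_of_nonneg Real.HolderConjugate.two_two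
          (Eventually.of_forall fun s => norm_nonneg _)
          (Eventually.of_forall fun s => norm_nonneg _) hma hmb
      have hrpow : ∀ g : ℝ → ℝ, (∫ s, g s ^ (2:ℝ) ∂μ) = ∫ s, g s ^ 2 ∂μ := by
        intro g
        refine integral_congr_ae (Eventually.of_forall fun s => ?_)
        dsimp only
        rw [show (2:ℝ) = ((2:ℕ):ℝ) by norm_num, Real.rpow_natCast]
      have hia : ∫ s, a s ^ 2 ∂μ ≤ c₀ ^ 2 * ‖I‖ ^ 2 :=
        le_trans (setIntegral_le_integral (hZ0 I).1
          (Eventually.of_forall fun s => by positivity)) (hZ0 I).2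
      have hib : ∫ s, b s ^ 2 ∂μ ≤ ‖v‖ ^ 2 :=
        le_trans (setIntegral_mono_set (hsm v).1
          (Eventually.of_forall fun s => by positivity)
          (HasSubset.Subset.eventuallyLE Set.Ioc_subset_Ioi_self)) (hsm v).2
      have hsq : ‖I‖ ^ 2 ≤ (c₀ * ‖I‖) * ‖v‖ := by
        have h4 : (∫ s, a s ^ (2:ℝ) ∂μ) ^ (1/2 : ℝ) ≤ c₀ * ‖I‖ := by
          rw [hrpow, ← Real.sqrt_eq_rpow]
          calc Real.sqrt (∫ s, a s ^ 2 ∂μ) ≤ Real.sqrt (c₀ ^ 2 * ‖I‖ ^ 2) :=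
                Real.sqrt_le_sqrt hia
            _ = c₀ * ‖I‖ := by
                rw [show c₀ ^ 2 * ‖I‖ ^ 2 = (c₀ * ‖I‖) ^ 2 by ring,
                  Real.sqrt_sq (by positivity)]
        have h5 : (∫ s, b s ^ (2:ℝ) ∂μ) ^ (1/2 : ℝ) ≤ ‖v‖ := by
          rw [hrpow, ← Real.sqrt_eq_rpow]
          calc Real.sqrt (∫ s, b s ^ 2 ∂μ) ≤ Real.sqrt (‖v‖ ^ 2) := Real.sqrt_le_sqrt hib
            _ = ‖v‖ := Real.sqrt_sq (norm_nonneg _)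
        have h6 : (0:ℝ) ≤ (∫ s, a s ^ (2:ℝ) ∂μ) ^ (1/2 : ℝ) := by
          rw [hrpow, ← Real.sqrt_eq_rpow]; exact Real.sqrt_nonneg _
        have h7 : (0:ℝ) ≤ (∫ s, b s ^ (2:ℝ) ∂μ) ^ (1/2 : ℝ) := by
          rw [hrpow, ← Real.sqrt_eq_rpow]; exact Real.sqrt_nonneg _
        calc ‖I‖ ^ 2 = ∫ s, RCLike.re (inner ℂ I (f s) : ℂ) ∂μ := h2
          _ ≤ ∫ s, a s * b s ∂μ := h3
          _ ≤ (∫ s, a s ^ (2:ℝ) ∂μ) ^ (1/2 : ℝ) * (∫ s, b s ^ (2:ℝ) ∂μ) ^ (1/2 : ℝ) := hcs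
          _ ≤ (c₀ * ‖I‖) * ‖v‖ := by
              exact mul_le_mul h4 h5 h7 (by positivity)
      by_cases hI0 : ‖I‖ = 0
      · rw [hI0]; positivity
      · have hIpos : 0 < ‖I‖ := lt_of_le_of_ne (norm_nonneg _) (Ne.symm hI0)
        nlinarith [hsq]
    · rw [intervalIntegral.integral_undef hint, norm_zero]
      positivity
  intro t u
  rcases le_or_gt 0 t with ht | ht
  · have h1 : ‖U t u‖ ≤ ‖u‖ := hcontr t ht u
    rw [inv_mul_eq_div, le_div_iff₀ hpos]
    nlinarith [norm_nonneg (U t u)]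
  · set v := U t u with hv
    have hT : (0:ℝ) ≤ -t := by linarith
    have huv : U (-t) v = u := by
      have h := hgroup (-t) t
      rw [neg_add_cancel, hU0'] at h
      have h2 := congrArg (fun A : ℋ →L[ℂ] ℋ => A u) h
      simpa [hv] using h2.symm
    have hd := hduhamel v (-t) hT
    rw [neg_neg, huv] at hd
    have hvIeq : v = U0 t u + (1/2 : ℂ) •
        (∫ s in (0:ℝ)..(-t), U0 (-s) ((adjoint C) (C (U s v)))) := by
      rw [hd]; abel
    have hkey := key v (-t) hT
    have hnorm : ‖v‖ ≤ ‖u‖ + (1/2) * (c₀ * ‖v‖) := by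
      calc ‖v‖ = ‖U0 t u + (1/2 : ℂ) •
            (∫ s in (0:ℝ)..(-t), U0 (-s) ((adjoint C) (C (U s v))))‖ := by rw [← hvIeq]
        _ ≤ ‖U0 t u‖ + ‖(1/2 : ℂ) •
            (∫ s in (0:ℝ)..(-t), U0 (-s) ((adjoint C) (C (U s v))))‖ := norm_add_le _ _
        _ = ‖u‖ + (1/2) *
            ‖∫ s in (0:ℝ)..(-t), U0 (-s) ((adjoint C) (C (U s v)))‖ := by
            rw [hunitary, norm_smul]
            norm_num
        _ ≤ ‖u‖ + (1/2) * (c₀ * ‖v‖) := by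
            exact add_le_add le_rfl (mul_le_mul_of_nonneg_left hkey (by norm_num))
    rw [inv_mul_eq_div, le_div_iff₀ hpos]
    nlinarith [hnorm]
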